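/- Let Λ be a graph with all vertex degrees in {2,4} and 2n vertices of degree 2, equipped with an edge partition Γ = (γ_1,...,γ_m) into cycles of length at most 4. Define the local gyration H_γ on 2-colorings of a cycle γ: it swaps black/white on every edge unless γ has length 4 (or punctured length 2) and is colored alternately, in which case it is the identity. Then H_Γ = ∏_i H_{γ_i} maps fully-packed loop configurations of Λ to fully-packed loop configurations of Λ, i.e. preserves the property that every degree-4 vertex has two black and two white incident edges and every degree-2 vertex has one of each. -/

import Mathlib

open Finset

variable {V E : Type*} [Fintype V] [Fintype E] [DecidableEq V] [DecidableEq E]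

/-- Multiplicity with which an edge `e` (with endpoints `ends e`) is incident to
the vertex `v`: `2` for a loop at `v`, `1` if `v` is one of the two distinct
endpoints, `0` otherwise. -/
def emult (ends : E → Sym2 V) (e : E) (v : V) : ℕ :=
  if ends e = Sym2.mk v v then 2 else if v ∈ ends e then 1 else 0

/-- Degree of a vertex. -/
def vdeg (ends : E → Sym2 V) (v : V) : ℕ := ∑ e : E, emult ends e v

/-- Black degree of a vertex under a 2-coloring `c` (`true` = black). -/
def bdeg (ends : E → Sym2 V) (c : E → Bool) (v : V) : ℕ :=
  ∑ e : E, if c e then emult ends e v else 0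

/-- Degree of a vertex within a set `S` of edges (e.g. one cycle of a cycle
decomposition). -/
def gdeg (ends : E → Sym2 V) (S : Finset E) (v : V) : ℕ := ∑ e ∈ S, emult ends e v

/-- Black degree of a vertex within a set `S` of edges. -/
def gbdeg (ends : E → Sym2 V) (c : E → Bool) (S : Finset E) (v : V) : ℕ :=
  ∑ e ∈ S, if c e then emult ends e v else 0

/-- A fully-packed loop configuration: every degree-4 vertex has two black and
two white incident edges, every degree-2 vertex one of each. -/
def IsFPL (ends : E → Sym2 V) (c : E → Bool) : Prop :=
  ∀ v : V, (vdeg ends v = 4 → bdeg ends c v = 2) ∧ (vdeg ends v = 2 → bdeg ends c v = 1)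

/-- A cycle is colored alternately iff each of its vertices has exactly one
black and one white among its two incident edges of the cycle. -/
def AltOn (ends : E → Sym2 V) (c : E → Bool) (S : Finset E) : Prop :=
  ∀ v : V, gdeg ends S v = 2 → gbdeg ends c S v = 1

instance (ends : E → Sym2 V) (c : E → Bool) (S : Finset E) : Decidable (AltOn ends c S) := by
  unfold AltOn; infer_instance

/-- The gyration `H_Γ = ∏ H_γ` associated to a cycle decomposition, given by the
class function `cls` (`cls e` is the cycle containing `e`) and a marking `punct`
of punctured cycles: on each cycle the colors are swapped, except on cycles of
length 4 (or punctured cycles of length 2) that are colored alternately, where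
the local gyration is the identity. -/
def gyr (ends : E → Sym2 V) (cls : E → Finset E) (punct : Finset E → Bool)
    (c : E → Bool) : E → Bool :=
  fun e =>
    if ((cls e).card = 4 ∨ ((cls e).card = 2 ∧ punct (cls e) = true)) ∧ AltOn ends c (cls e)
    then c e else !(c e)

lemma gbdeg_le_gdeg (ends : E → Sym2 V) (c : E → Bool) (S : Finset E) (v : V) :
    gbdeg ends c S v ≤ gdeg ends S v :=
  Finset.sum_le_sum fun e _ => by split <;> simp

lemma gyr_key (ends : E → Sym2 V) (cls : E → Finset E) (punct : Finset E → Bool)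
    (hcls : ∀ e e', e' ∈ cls e → cls e' = cls e)
    (hloc : ∀ e v, gdeg ends (cls e) v = 0 ∨ gdeg ends (cls e) v = 2)
    (c : E → Bool) (e₀ : E) (v : V) :
    gbdeg ends (gyr ends cls punct c) (cls e₀) v + gbdeg ends c (cls e₀) v
      = gdeg ends (cls e₀) v := by
  by_cases hcond : ((cls e₀).card = 4 ∨ ((cls e₀).card = 2 ∧ punct (cls e₀) = true)) ∧
      AltOn ends c (cls e₀)
  · have h1 : gbdeg ends (gyr ends cls punct c) (cls e₀) v = gbdeg ends c (cls e₀) v := by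
      unfold gbdeg
      refine Finset.sum_congr rfl fun e he => ?_
      have hce : cls e = cls e₀ := hcls e₀ e he
      simp only [gyr, hce, if_pos hcond]
    rw [h1]
    rcases hloc e₀ v with h0 | h2
    · have := gbdeg_le_gdeg ends c (cls e₀) v
      omega
    · rw [hcond.2 v h2, h2]
  · unfold gbdeg gdeg
    rw [← Finset.sum_add_distrib]
    refine Finset.sum_congr rfl fun e he => ?_
    have hce : cls e = cls e₀ := hcls e₀ e he
    have hg : gyr ends cls punct c e = !(c e) := by
      simp only [gyr, hce, if_neg hcond]
    rw [hg]
    cases c e <;> simp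

lemma sum_decomp (cls : E → Finset E)
    (hmem : ∀ e, e ∈ cls e)
    (hcls : ∀ e e', e' ∈ cls e → cls e' = cls e)
    (f : E → ℕ) :
    ∑ e : E, f e = ∑ S ∈ Finset.univ.image cls, ∑ e ∈ S, f e := by
  rw [← Finset.sum_fiberwise_of_maps_to (g := cls)
      (fun e _ => Finset.mem_image_of_mem cls (Finset.mem_univ e)) f]
  refine Finset.sum_congr rfl fun S hS => ?_
  obtain ⟨e₀, _, rfl⟩ := Finset.mem_image.mp hS
  refine Finset.sum_congr ?_ fun _ _ => rfl
  ext e'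
  simp only [Finset.mem_filter, Finset.mem_univ, true_and]
  constructor
  · intro h; rw [← h]; exact hmem e'
  · intro h; exact hcls e₀ e' h

/-- **Gyration maps FPLs to FPLs.**  Let `Λ` be a graph with all vertex degrees
in `{2, 4}`, with an edge partition `Γ` into cycles of length at most 4 (each
vertex having degree 0 or 2 within each cycle).  Then `H_Γ` preserves the
fully-packed loop property. -/
theorem gyration_preserves_FPL (ends : E → Sym2 V) (cls : E → Finset E)
    (punct : Finset E → Bool)
    (hmem : ∀ e, e ∈ cls e)
    (hcls : ∀ e e', e' ∈ cls e → cls e' = cls e)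
    (hlen : ∀ e, (cls e).card ≤ 4)
    (hloc : ∀ e v, gdeg ends (cls e) v = 0 ∨ gdeg ends (cls e) v = 2)
    (hdeg : ∀ v, vdeg ends v = 2 ∨ vdeg ends v = 4)
    (c : E → Bool) (hc : IsFPL ends c) :
    IsFPL ends (gyr ends cls punct c) := by
  have hmain : ∀ v, bdeg ends (gyr ends cls punct c) v + bdeg ends c v = vdeg ends v := by
    intro v
    unfold bdeg vdeg
    rw [sum_decomp cls hmem hcls, sum_decomp cls hmem hcls, sum_decomp cls hmem hcls,
      ← Finset.sum_add_distrib]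
    refine Finset.sum_congr rfl fun S hS => ?_
    obtain ⟨e₀, _, rfl⟩ := Finset.mem_image.mp hS
    exact gyr_key ends cls punct hcls hloc c e₀ v
  intro v
  obtain ⟨h4, h2⟩ := hc v
  have hm := hmain v
  constructor
  · intro hv; have := h4 hv; omega
  · intro hv; have := h2 hv; omega
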